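/- The maximum-entropy distribution on 𝒞₃ subject only to E[f₁] = 3p₁ and E[f₂] = p₁³p₂ is P̃(C) = p₁^{f₁(C)}(1-p₁)^{3-f₁(C)} p₂^{f₂(C)} (1-p₁²p₂)^{f₁(C)-3f₂(C)} (1-p₁³p₂)^{2f₂(C)-2}, and this distribution differs from the Kahle distribution P_Δ(C) = p₁^{f₁(C)}(1-p₁)^{3-f₁(C)} p₂^{f₂(C)}(1-p₂)^{φ₂(C)-f₂(C)} for generic p₁, p₂ ∈ (0,1) (e.g., there exists a complex C with P̃(C) ≠ P_Δ(C) whenever 0 < p₁ < 1 and 0 < p₂ < 1). -/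

import Mathlib

open Finset

/-- The set `𝒞₃` of simplicial complexes on vertex set `{1,2,3}` (containing all vertices). -/
def C3 := {c : Bool × Bool × Bool × Bool // c.2.2.2 = true → (c.1 && c.2.1 && c.2.2.1) = true}

instance : Fintype C3 := by unfold C3; infer_instance

instance : DecidableEq C3 := by unfold C3; infer_instance

/-- Number of edges. -/
def f1 (C : C3) : ℕ :=
  (if C.1.1 then 1 else 0) + (if C.1.2.1 then 1 else 0) + (if C.1.2.2.1 then 1 else 0)

/-- Indicator of the 2-simplex. -/
def f2 (C : C3) : ℕ := if C.1.2.2.2 then 1 else 0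

/-- Indicator that all three edges are present. -/
def phi2 (C : C3) : ℕ := if C.1.1 && C.1.2.1 && C.1.2.2.1 then 1 else 0

/-- The Kahle distribution `P_Δ` on `𝒞₃`. -/
def PDelta (p₁ p₂ : ℝ) (C : C3) : ℝ :=
  p₁ ^ f1 C * (1 - p₁) ^ (3 - f1 C) * p₂ ^ f2 C * (1 - p₂) ^ (phi2 C - f2 C)

/-- The maximum-entropy distribution on `𝒞₃` under only the two constraints `E[f₁] = 3p₁`
and `E[f₂] = p₁³p₂`:
`P̃(C) = p₁^{f₁}(1-p₁)^{3-f₁} p₂^{f₂} (1-p₁²p₂)^{f₁-3f₂} (1-p₁³p₂)^{2f₂-2}`. -/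
noncomputable def PTilde (p₁ p₂ : ℝ) (C : C3) : ℝ :=
  p₁ ^ f1 C * (1 - p₁) ^ (3 - f1 C) * p₂ ^ f2 C *
    (1 - p₁ ^ 2 * p₂) ^ ((f1 C : ℤ) - 3 * (f2 C : ℤ)) *
    (1 - p₁ ^ 3 * p₂) ^ (2 * (f2 C : ℤ) - 2)

lemma sum_C3 (g : C3 → ℝ) : ∑ C : C3, g C =
    g ⟨(false,false,false,false), by decide⟩ + g ⟨(true,false,false,false), by decide⟩ +
    g ⟨(false,true,false,false), by decide⟩ + g ⟨(false,false,true,false), by decide⟩ +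
    g ⟨(true,true,false,false), by decide⟩ + g ⟨(true,false,true,false), by decide⟩ +
    g ⟨(false,true,true,false), by decide⟩ + g ⟨(true,true,true,false), by decide⟩ +
    g ⟨(true,true,true,true), by decide⟩ := by
  rw [show (univ : Finset C3) =
    {⟨(false,false,false,false), by decide⟩, ⟨(true,false,false,false), by decide⟩,
     ⟨(false,true,false,false), by decide⟩, ⟨(false,false,true,false), by decide⟩,
     ⟨(true,true,false,false), by decide⟩, ⟨(true,false,true,false), by decide⟩,
     ⟨(false,true,true,false), by decide⟩, ⟨(true,true,true,false), by decide⟩,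
     ⟨(true,true,true,true), by decide⟩} from by decide]
  unfold C3 at g ⊢
  rw [sum_insert (by decide), sum_insert (by decide), sum_insert (by decide),
      sum_insert (by decide), sum_insert (by decide), sum_insert (by decide),
      sum_insert (by decide), sum_insert (by decide), sum_singleton]
  ring

lemma f1_le (C : C3) : f1 C ≤ 3 := by unfold f1; split_ifs <;> omega

lemma PTilde_pos {p₁ p₂ : ℝ} (h1 : 0 < p₁) (h2 : p₁ < 1) (h3 : 0 < p₂)
    (hx : 0 < 1 - p₁ ^ 2 * p₂) (hy : 0 < 1 - p₁ ^ 3 * p₂) (C : C3) :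
    0 < PTilde p₁ p₂ C := by
  unfold PTilde
  have h1' : (0:ℝ) < 1 - p₁ := by linarith
  exact mul_pos (mul_pos (mul_pos (mul_pos (pow_pos h1 _) (pow_pos h1' _)) (pow_pos h3 _))
    (zpow_pos hx _)) (zpow_pos hy _)

lemma log_PTilde {p₁ p₂ : ℝ} (h1 : 0 < p₁) (h2 : p₁ < 1) (h3 : 0 < p₂)
    (hx : 0 < 1 - p₁ ^ 2 * p₂) (hy : 0 < 1 - p₁ ^ 3 * p₂) (C : C3) :
    Real.log (PTilde p₁ p₂ C) =
      (3 * Real.log (1 - p₁) - 2 * Real.log (1 - p₁ ^ 3 * p₂))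
      + (Real.log p₁ - Real.log (1 - p₁) + Real.log (1 - p₁ ^ 2 * p₂)) * (f1 C : ℝ)
      + (Real.log p₂ - 3 * Real.log (1 - p₁ ^ 2 * p₂) + 2 * Real.log (1 - p₁ ^ 3 * p₂)) * (f2 C : ℝ) := by
  have h1' : (0:ℝ) < 1 - p₁ := by linarith
  have hA : p₁ ^ f1 C ≠ 0 := (pow_pos h1 _).ne'
  have hB : (1 - p₁) ^ (3 - f1 C) ≠ 0 := (pow_pos h1' _).ne'
  have hC : p₂ ^ f2 C ≠ 0 := (pow_pos h3 _).ne'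
  have hD : (1 - p₁ ^ 2 * p₂) ^ ((f1 C : ℤ) - 3 * (f2 C : ℤ)) ≠ 0 := (zpow_pos hx _).ne'
  have hE : (1 - p₁ ^ 3 * p₂) ^ (2 * (f2 C : ℤ) - 2) ≠ 0 := (zpow_pos hy _).ne'
  unfold PTilde
  rw [Real.log_mul (by positivity) hE, Real.log_mul (by positivity) hD,
      Real.log_mul (by positivity) hC, Real.log_mul hA hB,
      Real.log_pow, Real.log_pow, Real.log_pow, Real.log_zpow, Real.log_zpow]
  have hf : ((3 - f1 C : ℕ) : ℝ) = 3 - (f1 C : ℝ) := by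
    have := f1_le C
    push_cast [Nat.cast_sub this]
    ring
  rw [hf]
  push_cast
  ring

lemma gibbs (P Q : C3 → ℝ) (hQ : ∀ C, 0 < Q C) (hP : ∀ C, 0 ≤ P C)
    (hPs : ∑ C, P C = 1) (hQs : ∑ C, Q C = 1) :
    (∑ C : C3, (P C * Real.log (Q C) - P C * Real.log (P C)) ≤ 0) ∧
    ((∑ C : C3, (P C * Real.log (Q C) - P C * Real.log (P C))) = 0 ↔ P = Q) := by
  have key : ∀ C : C3, P C * Real.log (Q C) - P C * Real.log (P C) ≤ Q C - P C := by
    intro C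
    rcases eq_or_lt_of_le (hP C) with h | h
    · rw [← h]; simpa using (hQ C).le
    · have hlog : Real.log (Q C) - Real.log (P C) = Real.log (Q C / P C) :=
        (Real.log_div (hQ C).ne' h.ne').symm
      have h2 : Real.log (Q C / P C) ≤ Q C / P C - 1 :=
        Real.log_le_sub_one_of_pos (div_pos (hQ C) h)
      have e1 : P C * Real.log (Q C) - P C * Real.log (P C) = P C * Real.log (Q C / P C) := by
        rw [← hlog]; ring
      have e2 : P C * (Q C / P C - 1) = Q C - P C := by field_simp
      rw [e1, ← e2]
      exact mul_le_mul_of_nonneg_left h2 h.le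
  have hsum0 : ∑ C : C3, (Q C - P C) = 0 := by
    rw [Finset.sum_sub_distrib, hPs, hQs]; ring
  have hle : ∑ C : C3, (P C * Real.log (Q C) - P C * Real.log (P C)) ≤ 0 :=
    (Finset.sum_le_sum fun C _ => key C).trans_eq hsum0
  refine ⟨hle, ?_, ?_⟩
  · intro h0
    by_contra hne
    obtain ⟨C0, hC0⟩ := Function.ne_iff.mp hne
    have strict : P C0 * Real.log (Q C0) - P C0 * Real.log (P C0) < Q C0 - P C0 := by
      rcases eq_or_lt_of_le (hP C0) with h | h
      · rw [← h]; simpa using hQ C0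
      · have hne1 : Q C0 / P C0 ≠ 1 := by
          intro hq
          rw [div_eq_one_iff_eq h.ne'] at hq
          exact hC0 hq.symm
        have h2 : Real.log (Q C0 / P C0) < Q C0 / P C0 - 1 :=
          Real.log_lt_sub_one_of_pos (div_pos (hQ C0) h) hne1
        have hlog : Real.log (Q C0) - Real.log (P C0) = Real.log (Q C0 / P C0) :=
          (Real.log_div (hQ C0).ne' h.ne').symm
        have e1 : P C0 * Real.log (Q C0) - P C0 * Real.log (P C0)
            = P C0 * Real.log (Q C0 / P C0) := by rw [← hlog]; ring
        have e2 : P C0 * (Q C0 / P C0 - 1) = Q C0 - P C0 := by field_simp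
        rw [e1, ← e2]
        exact (mul_lt_mul_iff_right₀ h).mpr h2
    have hlt : ∑ C : C3, (P C * Real.log (Q C) - P C * Real.log (P C))
        < ∑ C : C3, (Q C - P C) :=
      Finset.sum_lt_sum (fun C _ => key C) ⟨C0, Finset.mem_univ C0, strict⟩
    rw [hsum0] at hlt
    linarith [h0 ▸ hlt]
  · intro h; subst h; simp


/-- `P̃` is a probability distribution satisfying `E[f₁]=3p₁` and `E[f₂]=p₁³p₂`; it is the
unique entropy maximizer on `𝒞₃` under these two constraints; and it differs from the Kahle
distribution `P_Δ`. -/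
theorem two_constraint_maximum_entropy_differs_from_kahle
    (p₁ p₂ : ℝ) (hp₁ : p₁ ∈ Set.Ioo (0 : ℝ) 1) (hp₂ : p₂ ∈ Set.Ioo (0 : ℝ) 1) :
    (∀ C, 0 ≤ PTilde p₁ p₂ C) ∧ (∑ C : C3, PTilde p₁ p₂ C = 1) ∧
    (∑ C : C3, (f1 C : ℝ) * PTilde p₁ p₂ C = 3 * p₁) ∧
    (∑ C : C3, (f2 C : ℝ) * PTilde p₁ p₂ C = p₁ ^ 3 * p₂) ∧
    (∀ P : C3 → ℝ, (∀ C, 0 ≤ P C) → (∑ C, P C = 1) →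
      (∑ C, (f1 C : ℝ) * P C = 3 * p₁) →
      (∑ C, (f2 C : ℝ) * P C = p₁ ^ 3 * p₂) →
      (-∑ C, P C * Real.log (P C)) ≤
          (-∑ C, PTilde p₁ p₂ C * Real.log (PTilde p₁ p₂ C)) ∧
      ((-∑ C, P C * Real.log (P C)) =
          (-∑ C, PTilde p₁ p₂ C * Real.log (PTilde p₁ p₂ C)) ↔ P = PTilde p₁ p₂)) ∧
    (∃ C : C3, PTilde p₁ p₂ C ≠ PDelta p₁ p₂ C) := by
  obtain ⟨h1, h2⟩ := hp₁
  obtain ⟨h3, h4⟩ := hp₂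
  have hx : 0 < 1 - p₁ ^ 2 * p₂ := by nlinarith
  have hy : 0 < 1 - p₁ ^ 3 * p₂ := by nlinarith
  have hQpos : ∀ C, 0 < PTilde p₁ p₂ C := PTilde_pos h1 h2 h3 hx hy
  have hQ1 : ∑ C : C3, PTilde p₁ p₂ C = 1 := by
    rw [sum_C3]
    simp only [PTilde, f1, f2]
    norm_num [zpow_ofNat]
    field_simp
    ring
  have hQf1 : ∑ C : C3, (f1 C : ℝ) * PTilde p₁ p₂ C = 3 * p₁ := by
    rw [sum_C3]
    simp only [PTilde, f1, f2]
    norm_num [zpow_ofNat]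
    field_simp
    ring
  have hQf2 : ∑ C : C3, (f2 C : ℝ) * PTilde p₁ p₂ C = p₁ ^ 3 * p₂ := by
    rw [sum_C3]
    simp only [PTilde, f1, f2]
    norm_num
  -- moment lemma
  have moment : ∀ P : C3 → ℝ, (∑ C, P C = 1) →
      (∑ C, (f1 C : ℝ) * P C = 3 * p₁) →
      (∑ C, (f2 C : ℝ) * P C = p₁ ^ 3 * p₂) →
      ∑ C : C3, P C * Real.log (PTilde p₁ p₂ C) =
        (3 * Real.log (1 - p₁) - 2 * Real.log (1 - p₁ ^ 3 * p₂))
        + (Real.log p₁ - Real.log (1 - p₁) + Real.log (1 - p₁ ^ 2 * p₂)) * (3 * p₁)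
        + (Real.log p₂ - 3 * Real.log (1 - p₁ ^ 2 * p₂) + 2 * Real.log (1 - p₁ ^ 3 * p₂))
            * (p₁ ^ 3 * p₂) := by
    intro P hPs hPf1 hPf2
    set α := 3 * Real.log (1 - p₁) - 2 * Real.log (1 - p₁ ^ 3 * p₂) with hα
    set β := Real.log p₁ - Real.log (1 - p₁) + Real.log (1 - p₁ ^ 2 * p₂) with hβ
    set γ := Real.log p₂ - 3 * Real.log (1 - p₁ ^ 2 * p₂) + 2 * Real.log (1 - p₁ ^ 3 * p₂) with hγ
    have : ∀ C : C3, P C * Real.log (PTilde p₁ p₂ C)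
        = α * P C + β * ((f1 C : ℝ) * P C) + γ * ((f2 C : ℝ) * P C) := by
      intro C
      rw [log_PTilde h1 h2 h3 hx hy C]
      ring
    rw [Finset.sum_congr rfl fun C _ => this C]
    rw [Finset.sum_add_distrib, Finset.sum_add_distrib, ← Finset.mul_sum, ← Finset.mul_sum,
        ← Finset.mul_sum, hPs, hPf1, hPf2]
    ring
  refine ⟨fun C => (hQpos C).le, hQ1, hQf1, hQf2, ?_, ?_⟩
  · intro P hP hPs hPf1 hPf2
    have hPQ : ∑ C : C3, P C * Real.log (PTilde p₁ p₂ C)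
        = ∑ C : C3, PTilde p₁ p₂ C * Real.log (PTilde p₁ p₂ C) := by
      rw [moment P hPs hPf1 hPf2, moment _ hQ1 hQf1 hQf2]
    obtain ⟨gle, geq⟩ := gibbs P (PTilde p₁ p₂) hQpos hP hPs hQ1
    have hD : ∑ C : C3, (P C * Real.log (PTilde p₁ p₂ C) - P C * Real.log (P C))
        = (-∑ C, P C * Real.log (P C)) - (-∑ C, PTilde p₁ p₂ C * Real.log (PTilde p₁ p₂ C)) := by
      rw [Finset.sum_sub_distrib, hPQ]; ring
    constructor
    · rw [hD] at gle; linarith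
    · rw [hD] at geq
      constructor
      · intro he; exact geq.mp (by linarith)
      · intro he
        have := geq.mpr he
        linarith
  · refine ⟨⟨(false,false,false,false), by decide⟩, ?_⟩
    simp only [PTilde, PDelta, f1, f2, phi2]
    norm_num
    -- remaining goal to inspect
    intro h
    have h3p : (0:ℝ) < (1 - p₁) ^ 3 := pow_pos (by linarith) 3
    have hinv : ((1 - p₁ ^ 3 * p₂) ^ 2)⁻¹ = 1 := by
      have := mul_left_cancel₀ h3p.ne' (h.trans (mul_one _).symm)
      exact this
    have hsq : (1 - p₁ ^ 3 * p₂) ^ 2 = 1 := by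
      rw [inv_eq_one] at hinv; exact hinv
    have hypos : 0 < p₁ ^ 3 * p₂ := by positivity
    nlinarith [hypos, hy, hsq]
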